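/- Every outcome returned by the PB Expanding Approvals Rule (PB-EAR) satisfies Inclusion PSC (IPSC). In particular, an IPSC outcome always exists for every PB instance with weak ordinal preferences. -/

import Mathlib

open Finset
open scoped Classical

noncomputable section

/-- Each voter's weak preference relation `pref i` is a total preorder. -/
def TotalPreorder {V C : Type} (pref : V → C → C → Prop) : Prop :=
  (∀ i a b, pref i a b ∨ pref i b a) ∧
  (∀ i a b c, pref i a b → pref i b c → pref i a c)

/-- `nth i j` is voter `i`'s `(j+1)`-th most preferred candidate under a fixed
tie-breaking: an enumeration of all candidates consistent with `pref i`. -/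
def TieBreak {V C : Type} [Fintype C] (pref : V → C → C → Prop) (nth : V → ℕ → C) : Prop :=
  (∀ i c, ∃ j, j < Fintype.card C ∧ nth i j = c) ∧
  (∀ i j j', j ≤ j' → pref i (nth i j) (nth i j'))

/-- `N'` solidly supports `C'`: every voter in `N'` weakly prefers every member of `C'`
to every non-member. -/
def Solid {V C : Type} (pref : V → C → C → Prop) (N' : Finset V) (C' : Finset C) : Prop :=
  ∀ i ∈ N', ∀ c' ∈ C', ∀ c, c ∉ C' → pref i c' c

/-- `P(N',C') = {c : ∃ i ∈ N', c ≿_i c^{(i,|C'|)}}` where `c^{(i,j)} = nth i (j-1)`. -/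
def Pset {V C : Type} [Fintype C] (pref : V → C → C → Prop) (nth : V → ℕ → C)
    (N' : Finset V) (C' : Finset C) : Finset C :=
  Finset.univ.filter fun c => ∃ i ∈ N', pref i c (nth i (C'.card - 1))

/-- total cost of a set of candidates -/
def cost {C : Type} (w : C → ℝ) (S : Finset C) : ℝ := ∑ c ∈ S, w c

/-- Comparative PSC for PB with general (weak) preferences. -/
def CPSC {V C : Type} [Fintype V] [Fintype C] (pref : V → C → C → Prop) (nth : V → ℕ → C)
    (b : V → ℝ) (w : C → ℝ) (L : ℝ) (W : Finset C) : Prop :=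
  ¬ ∃ (N' : Finset V) (C' : Finset C), Solid pref N' C' ∧
      cost w (Pset pref nth N' C' ∩ W) < (∑ i ∈ N', b i) * L / (Fintype.card V : ℝ) ∧
      ∃ C'' ⊆ C', cost w (Pset pref nth N' C' ∩ W) < cost w C'' ∧
        cost w C'' ≤ (∑ i ∈ N', b i) * L / (Fintype.card V : ℝ)

/-- Inclusion PSC for PB with general (weak) preferences. -/
def IPSC {V C : Type} [Fintype V] [Fintype C] (pref : V → C → C → Prop) (nth : V → ℕ → C)
    (b : V → ℝ) (w : C → ℝ) (L : ℝ) (W : Finset C) : Prop :=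
  ¬ ∃ (N' : Finset V) (C' : Finset C), Solid pref N' C' ∧
      cost w (Pset pref nth N' C' ∩ W) < (∑ i ∈ N', b i) * L / (Fintype.card V : ℝ) ∧
      ∃ c ∈ C', c ∉ Pset pref nth N' C' ∩ W ∧
        cost w (insert c (Pset pref nth N' C' ∩ W)) ≤ (∑ i ∈ N', b i) * L / (Fintype.card V : ℝ)

/-- `W` is exhaustive w.r.t. budget limit `L`. -/
def Exhaustive {C : Type} (w : C → ℝ) (L : ℝ) (W : Finset C) : Prop :=
  cost w W ≤ L ∧ ∀ c, c ∉ W → L < cost w (insert c W)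

/-- `W` is a maximal cost outcome w.r.t. budget limit `L`. -/
def MaximalCost {C : Type} (w : C → ℝ) (L : ℝ) (W : Finset C) : Prop :=
  cost w W ≤ L ∧ ∀ C' : Finset C, cost w C' ≤ L → cost w C' ≤ cost w W

/-- dichotomous preferences with approval sets `A i` -/
def Dichotomous {V C : Type} (pref : V → C → C → Prop) (A : V → Finset C) : Prop :=
  ∀ i a c, pref i a c ↔ (a ∈ A i ∨ c ∉ A i)

/-- `⋃_{i ∈ N'} A i` -/
def unionA {V C : Type} [Fintype C] (A : V → Finset C) (N' : Finset V) : Finset C :=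
  Finset.univ.filter fun c => ∃ i ∈ N', c ∈ A i

/-- `⋂_{i ∈ N'} A i` -/
def interA {V C : Type} [Fintype C] (A : V → Finset C) (N' : Finset V) : Finset C :=
  Finset.univ.filter fun c => ∀ i ∈ N', c ∈ A i

/-- State of the PB Expanding Approvals Rule: selected candidates, current voter
weights, and the current rank counter (0-indexed: stage `j` uses each voter's
`j+1` most-preferred candidates). -/
structure EARState (V C : Type) where
  W : Finset C
  wt : V → ℝ
  j : ℕ

/-- At stage `j`, voter `i` approves `c` iff `c ≿_i c^{(i,j+1)}`. -/
def approves {V C : Type} (pref : V → C → C → Prop) (nth : V → ℕ → C)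
    (i : V) (j : ℕ) (c : C) : Prop :=
  pref i c (nth i j)

/-- The set `C*` of unselected candidates whose supporter weight meets the
threshold `n·w(c)/L`. -/
def Cstar {V C : Type} [Fintype V] [Fintype C] (pref : V → C → C → Prop) (nth : V → ℕ → C)
    (w : C → ℝ) (L : ℝ) (s : EARState V C) : Finset C :=
  Finset.univ.filter fun c => c ∉ s.W ∧
    (Fintype.card V : ℝ) * w c / L ≤
      ∑ i ∈ Finset.univ.filter (fun i => approves pref nth i s.j c), s.wt i

/-- One step of PB-EAR, performed only while some further candidate could still be
afforded: either increment the rank counter when `C*` is empty, or select some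
`c* ∈ C*` and reduce the weights of its supporters by a total of `n·w(c*)/L`. -/
inductive EARStep {V C : Type} [Fintype V] [Fintype C] (pref : V → C → C → Prop)
    (nth : V → ℕ → C) (w : C → ℝ) (L : ℝ) : EARState V C → EARState V C → Prop
  | incr (s : EARState V C)
      (hguard : ∃ c ∉ s.W, cost w (insert c s.W) ≤ L)
      (hempty : Cstar pref nth w L s = ∅) :
      EARStep pref nth w L s ⟨s.W, s.wt, s.j + 1⟩
  | select (s : EARState V C) (c : C)
      (hguard : ∃ c' ∉ s.W, cost w (insert c' s.W) ≤ L)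
      (hc : c ∈ Cstar pref nth w L s) (wt' : V → ℝ)
      (hle : ∀ i, wt' i ≤ s.wt i) (hnn : ∀ i, 0 ≤ wt' i)
      (hout : ∀ i, ¬ approves pref nth i s.j c → wt' i = s.wt i)
      (htot : (∑ i, s.wt i) - (∑ i, wt' i) = (Fintype.card V : ℝ) * w c / L) :
      EARStep pref nth w L s ⟨insert c s.W, wt', s.j⟩


set_option linter.unusedSectionVars false

section Aux
variable {V C : Type} [Fintype V] [Fintype C]

lemma cost_nonneg {w : C → ℝ} (hw : ∀ c, 0 < w c) (S : Finset C) : 0 ≤ cost w S :=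
  Finset.sum_nonneg fun c _ => (hw c).le

lemma cost_mono {w : C → ℝ} (hw : ∀ c, 0 < w c) {S T : Finset C} (h : S ⊆ T) :
    cost w S ≤ cost w T :=
  Finset.sum_le_sum_of_subset_of_nonneg h fun c _ _ => (hw c).le

lemma cost_insert' {w : C → ℝ} {c : C} {S : Finset C} (h : c ∉ S) :
    cost w (insert c S) = w c + cost w S := Finset.sum_insert h

lemma tiebreak_injOn {pref : V → C → C → Prop} {nth : V → ℕ → C}
    (hnth : TieBreak pref nth) (i : V) :
    Set.InjOn (nth i) (Finset.range (Fintype.card C)) := by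
  have himg : (Finset.range (Fintype.card C)).image (nth i) = Finset.univ := by
    apply Finset.eq_univ_iff_forall.mpr
    intro c
    obtain ⟨j, hj, hje⟩ := hnth.1 i c
    exact Finset.mem_image.mpr ⟨j, Finset.mem_range.mpr hj, hje⟩
  apply Finset.injOn_of_card_image_eq
  rw [himg, Finset.card_range, Finset.card_univ]

lemma approves_mono {pref : V → C → C → Prop} {nth : V → ℕ → C}
    (hpref : TotalPreorder pref) (hnth : TieBreak pref nth)
    {i : V} {j j' : ℕ} {c : C} (h : j ≤ j')
    (ha : approves pref nth i j c) : approves pref nth i j' c :=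
  hpref.2 i c _ _ ha (hnth.2 i j j' h)

lemma solid_nth {pref : V → C → C → Prop} {nth : V → ℕ → C}
    (hpref : TotalPreorder pref) (hnth : TieBreak pref nth)
    {N' : Finset V} {C' : Finset C} (hsolid : Solid pref N' C')
    {i : V} (hi : i ∈ N') {c' : C} (hc' : c' ∈ C') :
    pref i c' (nth i (C'.card - 1)) := by
  by_cases hex : ∃ j, j ≤ C'.card - 1 ∧ nth i j ∉ C'
  · obtain ⟨j, hj, hnot⟩ := hex
    exact hpref.2 i _ _ _ (hsolid i hi c' hc' _ hnot) (hnth.2 i j _ hj)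
  · push_neg at hex
    have hC'le : C'.card ≤ Fintype.card C := by
      simpa using Finset.card_le_card (Finset.subset_univ C')
    have hC'pos : 0 < C'.card := Finset.card_pos.mpr ⟨c', hc'⟩
    have hsub : Finset.range (C'.card - 1 + 1) ⊆ Finset.range (Fintype.card C) :=
      Finset.range_subset_range.mpr (by omega)
    have hinj : Set.InjOn (nth i) (Finset.range (C'.card - 1 + 1)) :=
      (tiebreak_injOn hnth i).mono (Finset.coe_subset.mpr hsub)
    have himg : (Finset.range (C'.card - 1 + 1)).image (nth i) = C' := by
      apply Finset.eq_of_subset_of_card_le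
      · intro x hx
        obtain ⟨j, hj, rfl⟩ := Finset.mem_image.mp hx
        exact hex j (Nat.lt_succ_iff.mp (Finset.mem_range.mp hj))
      · rw [Finset.card_image_of_injOn hinj, Finset.card_range]; omega
    obtain ⟨j, hj, hje⟩ := Finset.mem_image.mp (himg ▸ hc')
    rw [← hje]
    exact hnth.2 i j _ (Nat.lt_succ_iff.mp (Finset.mem_range.mp hj))

lemma earstep_W_subset {pref : V → C → C → Prop} {nth : V → ℕ → C} {w : C → ℝ} {L : ℝ}
    {s t : EARState V C} (h : EARStep pref nth w L s t) : s.W ⊆ t.W := by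
  cases h with
  | incr => exact Finset.Subset.refl _
  | select => exact Finset.subset_insert _ _

lemma rtg_W_subset {pref : V → C → C → Prop} {nth : V → ℕ → C} {w : C → ℝ} {L : ℝ}
    {s t : EARState V C} (h : Relation.ReflTransGen (EARStep pref nth w L) s t) :
    s.W ⊆ t.W := by
  induction h with
  | refl => exact Finset.Subset.refl _
  | tail _ hstep ih => exact ih.trans (earstep_W_subset hstep)

end Aux

lemma terminal_ipsc {V C : Type} [Fintype V] [Fintype C] [Nonempty V]
    (pref : V → C → C → Prop) (nth : V → ℕ → C) (b : V → ℝ) (w : C → ℝ) (L : ℝ)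
    (hpref : TotalPreorder pref) (hnth : TieBreak pref nth)
    (hb : ∀ i, 0 < b i) (hbsum : (∑ i, b i) = (Fintype.card V : ℝ))
    (hw : ∀ c, 0 < w c) (hL : 0 < L)
    (s : EARState V C)
    (hrun : Relation.ReflTransGen (EARStep pref nth w L) ⟨∅, b, 0⟩ s)
    (hterm : ¬ ∃ c ∉ s.W, cost w (insert c s.W) ≤ L) :
    IPSC pref nth b w L s.W := by
  rintro ⟨N', C', hsolid, hlt, c, hcC', hcP, hcins⟩
  have hn : (0:ℝ) < (Fintype.card V : ℝ) := by exact_mod_cast Fintype.card_pos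
  have hN'ne : N'.Nonempty := by
    rcases Finset.eq_empty_or_nonempty N' with h | h
    · exfalso
      rw [h] at hlt
      simp only [Finset.sum_empty, zero_mul, zero_div] at hlt
      exact absurd hlt (not_lt.mpr (cost_nonneg hw _))
    · exact h
  obtain ⟨i₀, hi₀⟩ := hN'ne
  have hkey : ∀ i ∈ N', pref i c (nth i (C'.card - 1)) :=
    fun i hi => solid_nth hpref hnth hsolid hi hcC'
  have hcPset : c ∈ Pset pref nth N' C' :=
    Finset.mem_filter.mpr ⟨Finset.mem_univ _, i₀, hi₀, hkey i₀ hi₀⟩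
  have hcW : c ∉ s.W := fun h => hcP (Finset.mem_inter.mpr ⟨hcPset, h⟩)
  have hins : w c + cost w (Pset pref nth N' C' ∩ s.W)
      ≤ (∑ i ∈ N', b i) * L / (Fintype.card V : ℝ) := by
    rw [← cost_insert' hcP]; exact hcins
  have hins' : (w c + cost w (Pset pref nth N' C' ∩ s.W)) * (Fintype.card V : ℝ)
      ≤ (∑ i ∈ N', b i) * L := (le_div_iff₀ hn).mp hins
  have hterm' : L < w c + cost w s.W := by
    push_neg at hterm
    have := hterm c hcW
    rwa [cost_insert' hcW] at this
  have hUsubP : ∀ W0 : Finset C, W0 ⊆ s.W →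
      (W0.filter (fun d => ∃ i ∈ N', approves pref nth i (C'.card - 1) d)) ⊆
        Pset pref nth N' C' ∩ s.W := by
    intro W0 hW0 d hd
    rw [Finset.mem_filter] at hd
    exact Finset.mem_inter.mpr ⟨Finset.mem_filter.mpr ⟨Finset.mem_univ _, hd.2⟩, hW0 hd.1⟩
  have main : ∀ t : EARState V C, Relation.ReflTransGen (EARStep pref nth w L) t s →
      ((∀ i, 0 ≤ t.wt i) ∧
       ((∑ i, t.wt i) =
          (Fintype.card V : ℝ) - (Fintype.card V : ℝ) * cost w t.W / L) ∧
       c ∉ t.W ∧ t.j ≤ C'.card - 1 ∧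
       (∑ i ∈ N', (b i - t.wt i)) ≤
         (Fintype.card V : ℝ) *
           cost w (t.W.filter (fun d => ∃ i ∈ N', approves pref nth i (C'.card - 1) d)) / L)
      → False := by
    intro t ht
    induction ht using Relation.ReflTransGen.head_induction_on with
    | refl =>
      rintro ⟨hnn, hsum, hcw, hjm, hmain⟩
      have h2 : cost w (s.W.filter (fun d => ∃ i ∈ N', approves pref nth i (C'.card - 1) d))
          ≤ cost w (Pset pref nth N' C' ∩ s.W) := cost_mono hw (hUsubP s.W Finset.Subset.rfl)
      have hmain' := (le_div_iff₀ hL).mp hmain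
      rw [Finset.sum_sub_distrib] at hmain'
      have h6 : ∑ i ∈ N', s.wt i ≤ ∑ i, s.wt i :=
        Finset.sum_le_sum_of_subset_of_nonneg (Finset.subset_univ _) (fun i _ _ => hnn i)
      have hsum' : (∑ i, s.wt i) * L =
          (Fintype.card V : ℝ) * L - (Fintype.card V : ℝ) * cost w s.W := by
        rw [hsum, sub_mul, div_mul_cancel₀ _ hL.ne']
      nlinarith [mul_le_mul_of_nonneg_left h2 hn.le,
                 mul_le_mul_of_nonneg_right h6 hL.le,
                 mul_lt_mul_of_pos_left hterm' hn]
    | @head t0 u hstep htail ih =>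
      rintro ⟨hnn, hsum, hcw, hjm, hmain⟩
      apply ih
      cases hstep with
      | incr hguard hempty =>
        have hWsub := rtg_W_subset htail
        refine ⟨hnn, hsum, hcw, ?_, hmain⟩
        show t0.j + 1 ≤ C'.card - 1
        rcases Nat.lt_or_ge t0.j (C'.card - 1) with h | h
        · omega
        · exfalso
          have hjeq : t0.j = C'.card - 1 := le_antisymm hjm h
          have hcCs : c ∈ Cstar pref nth w L t0 := by
            refine Finset.mem_filter.mpr ⟨Finset.mem_univ _, hcw, ?_⟩
            have hsubN : N' ⊆ Finset.univ.filter (fun i => approves pref nth i t0.j c) := by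
              intro i hi
              refine Finset.mem_filter.mpr ⟨Finset.mem_univ _, ?_⟩
              show pref i c (nth i t0.j)
              rw [hjeq]
              exact hkey i hi
            have h1 : ∑ i ∈ N', t0.wt i ≤
                ∑ i ∈ Finset.univ.filter (fun i => approves pref nth i t0.j c), t0.wt i :=
              Finset.sum_le_sum_of_subset_of_nonneg hsubN (fun i _ _ => hnn i)
            have h2 : cost w (t0.W.filter (fun d => ∃ i ∈ N', approves pref nth i (C'.card - 1) d))
                ≤ cost w (Pset pref nth N' C' ∩ s.W) := cost_mono hw (hUsubP t0.W hWsub)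
            have hmain' := (le_div_iff₀ hL).mp hmain
            rw [Finset.sum_sub_distrib] at hmain'
            rw [div_le_iff₀ hL]
            nlinarith [mul_le_mul_of_nonneg_left h2 hn.le,
                       mul_le_mul_of_nonneg_right h1 hL.le]
          rw [hempty] at hcCs
          exact absurd hcCs (Finset.notMem_empty c)
      | select d hguard hcd wt' hle hnn' hout htot =>
        have hWsub : insert d t0.W ⊆ s.W := fun x hx => rtg_W_subset htail hx
        have hdW : d ∉ t0.W := (Finset.mem_filter.mp hcd).2.1
        have hdc : d ≠ c := by
          rintro rfl
          exact hcW (hWsub (Finset.mem_insert_self _ _))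
        refine ⟨hnn', ?_, ?_, hjm, ?_⟩
        · show (∑ i, wt' i) =
            (Fintype.card V : ℝ) - (Fintype.card V : ℝ) * cost w (insert d t0.W) / L
          have h1 : ∑ i, wt' i = (∑ i, t0.wt i) - (Fintype.card V : ℝ) * w d / L := by
            linarith [htot]
          rw [h1, hsum, cost_insert' hdW]
          ring
        · show c ∉ insert d t0.W
          rw [Finset.mem_insert]
          rintro (rfl | h)
          · exact hdc rfl
          · exact hcw h
        · show (∑ i ∈ N', (b i - wt' i)) ≤
            (Fintype.card V : ℝ) *
              cost w ((insert d t0.W).filter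
                (fun x => ∃ i ∈ N', approves pref nth i (C'.card - 1) x)) / L
          by_cases happ : ∃ i ∈ N', approves pref nth i t0.j d
          · have hdU : d ∈ (insert d t0.W).filter
                (fun x => ∃ i ∈ N', approves pref nth i (C'.card - 1) x) := by
              refine Finset.mem_filter.mpr ⟨Finset.mem_insert_self _ _, ?_⟩
              obtain ⟨i, hi, ha⟩ := happ
              exact ⟨i, hi, approves_mono hpref hnth hjm ha⟩
            have hdUold : d ∉ t0.W.filter
                (fun x => ∃ i ∈ N', approves pref nth i (C'.card - 1) x) :=
              fun h => hdW (Finset.mem_filter.mp h).1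
            have hsubU : insert d (t0.W.filter
                  (fun x => ∃ i ∈ N', approves pref nth i (C'.card - 1) x)) ⊆
                (insert d t0.W).filter
                  (fun x => ∃ i ∈ N', approves pref nth i (C'.card - 1) x) := by
              intro x hx
              rcases Finset.mem_insert.mp hx with rfl | hx
              · exact hdU
              · exact Finset.filter_subset_filter _ (Finset.subset_insert _ _) hx
            have hcostU : w d + cost w (t0.W.filter
                  (fun x => ∃ i ∈ N', approves pref nth i (C'.card - 1) x))
                ≤ cost w ((insert d t0.W).filter
                  (fun x => ∃ i ∈ N', approves pref nth i (C'.card - 1) x)) := by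
              rw [← cost_insert' hdUold]
              exact cost_mono hw hsubU
            have hsplit : ∑ i ∈ N', (b i - wt' i) =
                (∑ i ∈ N', (b i - t0.wt i)) + ∑ i ∈ N', (t0.wt i - wt' i) := by
              rw [← Finset.sum_add_distrib]
              apply Finset.sum_congr rfl
              intros; ring
            have h5 : ∑ i ∈ N', (t0.wt i - wt' i) ≤ ∑ i, (t0.wt i - wt' i) :=
              Finset.sum_le_sum_of_subset_of_nonneg (Finset.subset_univ _)
                (fun i _ _ => sub_nonneg.mpr (hle i))
            have h6 : ∑ i, (t0.wt i - wt' i) = (Fintype.card V : ℝ) * w d / L := by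
              rw [Finset.sum_sub_distrib]; exact htot
            have h7 : ((Fintype.card V : ℝ) * w d / L) * L = (Fintype.card V : ℝ) * w d :=
              div_mul_cancel₀ _ hL.ne'
            have hmain' := (le_div_iff₀ hL).mp hmain
            rw [le_div_iff₀ hL, hsplit]
            nlinarith [mul_le_mul_of_nonneg_left hcostU hn.le,
                       mul_le_mul_of_nonneg_right h5 hL.le]
          · have heq : ∑ i ∈ N', (b i - wt' i) = ∑ i ∈ N', (b i - t0.wt i) := by
              apply Finset.sum_congr rfl
              intro i hi
              rw [hout i (fun ha => happ ⟨i, hi, ha⟩)]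
            rw [heq]
            refine le_trans hmain ?_
            rw [div_le_div_iff₀ hL hL]
            have hsub2 : (t0.W.filter (fun x => ∃ i ∈ N', approves pref nth i (C'.card - 1) x)) ⊆
                ((insert d t0.W).filter (fun x => ∃ i ∈ N', approves pref nth i (C'.card - 1) x)) :=
              Finset.filter_subset_filter _ (Finset.subset_insert _ _)
            nlinarith [mul_le_mul_of_nonneg_left (cost_mono hw hsub2) hn.le]
  exact main ⟨∅, b, 0⟩ hrun
    ⟨fun i => (hb i).le,
     by simpa [cost] using hbsum,
     Finset.notMem_empty c,
     Nat.zero_le _,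
     by simp [cost, Finset.filter_empty]⟩
lemma exists_terminal {V C : Type} [Fintype V] [Fintype C] [Nonempty V]
    (pref : V → C → C → Prop) (nth : V → ℕ → C) (w : C → ℝ) (L : ℝ)
    (hnth : TieBreak pref nth) (hw : ∀ c, 0 < w c) (hL : 0 < L) :
    ∀ (k : ℕ) (s : EARState V C),
      (Fintype.card C - s.W.card) * (Fintype.card C + 1) + (Fintype.card C - s.j) < k →
      (∀ i, 0 ≤ s.wt i) →
      ((∑ i, s.wt i) = (Fintype.card V : ℝ) - (Fintype.card V : ℝ) * cost w s.W / L) →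
      ∃ t : EARState V C, Relation.ReflTransGen (EARStep pref nth w L) s t ∧
        (¬ ∃ c ∉ t.W, cost w (insert c t.W) ≤ L) := by
  intro k
  induction k with
  | zero => intro s h _ _; exact absurd h (Nat.not_lt_zero _)
  | succ k ih =>
    intro s hk hnn hsum
    by_cases hterm : ∃ c ∉ s.W, cost w (insert c s.W) ≤ L
    · obtain ⟨c₀, hc₀W, hc₀aff⟩ := hterm
      have hn : (0:ℝ) < (Fintype.card V : ℝ) := by exact_mod_cast Fintype.card_pos
      have haff' : w c₀ + cost w s.W ≤ L := by
        rwa [cost_insert' hc₀W] at hc₀aff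
      have hcardW : s.W.card < Fintype.card C := by
        have hne : s.W ≠ Finset.univ := fun h => hc₀W (h ▸ Finset.mem_univ c₀)
        have := Finset.card_lt_card ((Finset.subset_univ s.W).ssubset_of_ne hne)
        simpa using this
      by_cases hCs : Cstar pref nth w L s = ∅
      · -- increment the rank counter
        have hjlt : s.j + 1 < Fintype.card C := by
          by_contra hge
          push_neg at hge
          have happall : ∀ i, approves pref nth i s.j c₀ := by
            intro i
            obtain ⟨j', hj', hje⟩ := hnth.1 i c₀
            have hjle : j' ≤ s.j := by omega
            show pref i c₀ (nth i s.j)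
            rw [← hje]
            exact hnth.2 i j' s.j hjle
          have hfil : Finset.univ.filter (fun i => approves pref nth i s.j c₀) =
              Finset.univ := Finset.filter_true_of_mem (fun i _ => happall i)
          have hthr : (Fintype.card V : ℝ) * w c₀ / L ≤
              ∑ i ∈ Finset.univ.filter (fun i => approves pref nth i s.j c₀), s.wt i := by
            rw [hfil, hsum, div_le_iff₀ hL, sub_mul, div_mul_cancel₀ _ hL.ne']
            nlinarith [mul_le_mul_of_nonneg_left haff' hn.le]
          have hmem : c₀ ∈ Cstar pref nth w L s :=
            Finset.mem_filter.mpr ⟨Finset.mem_univ _, hc₀W, hthr⟩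
          rw [hCs] at hmem
          exact absurd hmem (Finset.notMem_empty _)
        have hstep : EARStep pref nth w L s ⟨s.W, s.wt, s.j + 1⟩ :=
          EARStep.incr s ⟨c₀, hc₀W, hc₀aff⟩ hCs
        have hdec : (Fintype.card C - s.W.card) * (Fintype.card C + 1) +
            (Fintype.card C - (s.j + 1)) < k := by
          generalize (Fintype.card C - s.W.card) * (Fintype.card C + 1) = a at hk ⊢
          omega
        obtain ⟨t, hrtg, ht⟩ := ih ⟨s.W, s.wt, s.j + 1⟩ hdec hnn hsum
        exact ⟨t, Relation.ReflTransGen.head hstep hrtg, ht⟩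
      · -- select a candidate from C*
        obtain ⟨d, hd⟩ := Finset.nonempty_iff_ne_empty.mpr hCs
        have hdmem := Finset.mem_filter.mp hd
        have hdW : d ∉ s.W := hdmem.2.1
        have hthr : (Fintype.card V : ℝ) * w d / L ≤
            ∑ i ∈ Finset.univ.filter (fun i => approves pref nth i s.j d), s.wt i :=
          hdmem.2.2
        set A := Finset.univ.filter (fun i => approves pref nth i s.j d) with hA
        set S := ∑ i ∈ A, s.wt i with hS
        set τ := (Fintype.card V : ℝ) * w d / L with hτ
        have hτpos : 0 < τ := div_pos (mul_pos hn (hw d)) hL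
        have hSpos : 0 < S := lt_of_lt_of_le hτpos hthr
        set wt' := fun i => s.wt i - (if i ∈ A then s.wt i * τ / S else 0) with hwt'
        have hle : ∀ i, wt' i ≤ s.wt i := by
          intro i
          rw [hwt']
          dsimp only
          apply sub_le_self
          split_ifs with h
          · exact div_nonneg (mul_nonneg (hnn i) hτpos.le) hSpos.le
          · exact le_refl 0
        have hnn'' : ∀ i, 0 ≤ wt' i := by
          intro i
          rw [hwt']
          dsimp only
          split_ifs with h
          · have h1 : s.wt i * τ ≤ s.wt i * S := mul_le_mul_of_nonneg_left hthr (hnn i)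
            have h2 : s.wt i * τ / S ≤ s.wt i := by
              rw [div_le_iff₀ hSpos]
              exact h1
            linarith
          · simpa using hnn i
        have hout : ∀ i, ¬ approves pref nth i s.j d → wt' i = s.wt i := by
          intro i hi
          rw [hwt']
          dsimp only
          rw [if_neg (by simp [hA, hi]), sub_zero]
        have htot : (∑ i, s.wt i) - (∑ i, wt' i) = (Fintype.card V : ℝ) * w d / L := by
          rw [← Finset.sum_sub_distrib, ← hτ]
          calc ∑ i, (s.wt i - wt' i) = ∑ i, (if i ∈ A then s.wt i * τ / S else 0) := by
                apply Finset.sum_congr rfl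
                intro i _
                rw [hwt']
                ring
          _ = ∑ i ∈ A, s.wt i * τ / S := by rw [Finset.sum_ite_mem, Finset.univ_inter]
          _ = (∑ i ∈ A, s.wt i) * τ / S := by rw [← Finset.sum_div, ← Finset.sum_mul]
          _ = τ := by rw [← hS, mul_comm, mul_div_assoc, div_self hSpos.ne', mul_one]
        have hstep : EARStep pref nth w L s ⟨insert d s.W, wt', s.j⟩ :=
          EARStep.select s d ⟨c₀, hc₀W, hc₀aff⟩ hd wt' hle hnn'' hout htot
        have hsum' : (∑ i, wt' i) =
            (Fintype.card V : ℝ) - (Fintype.card V : ℝ) * cost w (insert d s.W) / L := by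
          have h1 : ∑ i, wt' i = (∑ i, s.wt i) - (Fintype.card V : ℝ) * w d / L := by
            have := htot
            rw [← hτ] at this ⊢
            linarith
          rw [h1, hsum, cost_insert' hdW]
          ring
        have hdec : (Fintype.card C - (insert d s.W).card) * (Fintype.card C + 1) +
            (Fintype.card C - s.j) < k := by
          rw [Finset.card_insert_of_notMem hdW]
          have h2 : (Fintype.card C - s.W.card) * (Fintype.card C + 1) =
              (Fintype.card C - (s.W.card + 1)) * (Fintype.card C + 1) +
                (Fintype.card C + 1) := by
            have h3 : Fintype.card C - s.W.card = (Fintype.card C - (s.W.card + 1)) + 1 := by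
              omega
            rw [h3, add_mul, one_mul]
          rw [h2] at hk
          generalize (Fintype.card C - (s.W.card + 1)) * (Fintype.card C + 1) = a at hk ⊢
          omega
        obtain ⟨t, hrtg, ht⟩ := ih ⟨insert d s.W, wt', s.j⟩ hdec hnn'' hsum'
        exact ⟨t, Relation.ReflTransGen.head hstep hrtg, ht⟩
    · exact ⟨s, Relation.ReflTransGen.refl, hterm⟩

lemma run_invariant {V C : Type} [Fintype V] [Fintype C]
    (pref : V → C → C → Prop) (nth : V → ℕ → C) (b : V → ℝ) (w : C → ℝ) (L : ℝ)
    (hb : ∀ i, 0 < b i) (hbsum : (∑ i, b i) = (Fintype.card V : ℝ)) (hL : 0 < L)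
    {t : EARState V C}
    (h : Relation.ReflTransGen (EARStep pref nth w L) ⟨∅, b, 0⟩ t) :
    (∀ i, 0 ≤ t.wt i) ∧
      (∑ i, t.wt i) = (Fintype.card V : ℝ) - (Fintype.card V : ℝ) * cost w t.W / L := by
  induction h with
  | refl => exact ⟨fun i => (hb i).le, by simpa [cost] using hbsum⟩
  | @tail mid t' hrtg hstep ih =>
    obtain ⟨hnn, hsum⟩ := ih
    cases hstep with
    | incr hguard hempty => exact ⟨hnn, hsum⟩
    | select d hguard hcd wt' hle hnn2 hout htot =>
      refine ⟨hnn2, ?_⟩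
      have hdW : d ∉ mid.W := (Finset.mem_filter.mp hcd).2.1
      have h1 : ∑ i, wt' i = (∑ i, mid.wt i) - (Fintype.card V : ℝ) * w d / L := by
        linarith [htot]
      show (∑ i, wt' i) =
        (Fintype.card V : ℝ) - (Fintype.card V : ℝ) * cost w (insert d mid.W) / L
      rw [h1, hsum, cost_insert' hdW]
      ring


/-- every outcome returned by PB-EAR (a terminal state reachable from
the initial state) satisfies IPSC; in particular an IPSC outcome always exists. -/
theorem pbear_satisfies_ipsc {V C : Type} [Fintype V] [Fintype C] [Nonempty V]
    (pref : V → C → C → Prop) (nth : V → ℕ → C) (b : V → ℝ) (w : C → ℝ) (L : ℝ)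
    (hpref : TotalPreorder pref) (hnth : TieBreak pref nth)
    (hb : ∀ i, 0 < b i) (hbsum : (∑ i, b i) = (Fintype.card V : ℝ))
    (hw : ∀ c, 0 < w c) (hL : 0 < L) :
    (∀ s : EARState V C,
        Relation.ReflTransGen (EARStep pref nth w L) ⟨∅, b, 0⟩ s →
        (¬ ∃ c ∉ s.W, cost w (insert c s.W) ≤ L) →
        IPSC pref nth b w L s.W) ∧
    ∃ W : Finset C, cost w W ≤ L ∧ IPSC pref nth b w L W := by
  constructor
  · intro s hrun hterm
    exact terminal_ipsc pref nth b w L hpref hnth hb hbsum hw hL s hrun hterm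
  · obtain ⟨t, hrtg, hterm⟩ :=
      exists_terminal pref nth w L hnth hw hL
        ((Fintype.card C - (∅ : Finset C).card) * (Fintype.card C + 1) +
          (Fintype.card C - 0) + 1)
        ⟨∅, b, 0⟩ (Nat.lt_succ_self _) (fun i => (hb i).le) (by simpa [cost] using hbsum)
  
    have hn : (0:ℝ) < (Fintype.card V : ℝ) := by exact_mod_cast Fintype.card_pos
    obtain ⟨hnn, hsum⟩ := run_invariant pref nth b w L hb hbsum hL hrtg
    have h0 : (0:ℝ) ≤ ∑ i, t.wt i := Finset.sum_nonneg (fun i _ => hnn i)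
    rw [hsum] at h0
    have h1 : (Fintype.card V : ℝ) * cost w t.W / L ≤ (Fintype.card V : ℝ) := by linarith
    rw [div_le_iff₀ hL] at h1
    have hcost : cost w t.W ≤ L := by
      have h2 : (Fintype.card V : ℝ) * cost w t.W ≤ (Fintype.card V : ℝ) * L := by
        linarith
      exact (mul_le_mul_iff_of_pos_left hn).mp h2
    exact ⟨t.W, hcost,
      terminal_ipsc pref nth b w L hpref hnth hb hbsum hw hL t hrtg hterm⟩
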